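/- (Watkins–Zeitlin) The minimal polynomials Ψ_d of 2·cos(2π/d) satisfy, as identities in ℚ[X]: for every natural number s ≥ 1, ∏_{d ∣ 2s} Ψ_d = P_{s+1} − P_{s−1}, and for every natural number s ≥ 0, ∏_{d ∣ 2s+1} Ψ_d = P_{s+1} − P_s, where the products run over all positive divisors d of 2s (respectively 2s+1) and the polynomials P are mapped from ℤ[X] into ℚ[X]. -/

import Mathlib

open Real Polynomial

/-- Rescaled Chebyshev polynomials of the first kind:
`P 0 = 2`, `P 1 = X`, `P (n+2) = X * P (n+1) - P n`,
satisfying `P n (2 cos θ) = 2 cos (n θ)`. -/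
noncomputable def P : ℕ → Polynomial ℤ
  | 0 => 2
  | 1 => X
  | (n + 2) => X * P (n + 1) - P n

lemma P_eval (θ : ℝ) : ∀ n : ℕ, (Polynomial.aeval (2 * Real.cos θ) (P n) : ℝ) = 2 * Real.cos (n * θ) := by
  intro n
  induction n using Nat.strong_induction_on with
  | _ n ih =>
    match n with
    | 0 =>
      show (Polynomial.aeval (2 * Real.cos θ) (2 : Polynomial ℤ) : ℝ) = _
      rw [map_ofNat]; simp
    | 1 => show (Polynomial.aeval (2 * Real.cos θ) (X : Polynomial ℤ) : ℝ) = _; simp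
    | (m + 2) =>
      rw [P]
      simp only [map_sub, map_mul, aeval_X, ih (m+1) (by omega), ih m (by omega)]
      have h1 : ((m : ℝ) + 2) * θ = ((m : ℝ) + 1) * θ + θ := by ring
      have h2 : (m : ℝ) * θ = ((m : ℝ) + 1) * θ - θ := by ring
      push_cast
      rw [h1, h2, Real.cos_add, Real.cos_sub]
      ring

lemma P_monic : ∀ n : ℕ, (P n).natDegree ≤ n ∧ (1 ≤ n → (P n).Monic ∧ (P n).natDegree = n) := by
  intro n
  induction n using Nat.strong_induction_on with
  | _ n ih =>
    match n with
    | 0 =>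
      refine ⟨?_, by omega⟩
      show (2 : Polynomial ℤ).natDegree ≤ 0
      simp
    | 1 =>
      constructor
      · show (X : Polynomial ℤ).natDegree ≤ 1; simp
      · intro _; exact ⟨monic_X, natDegree_X⟩
    | (m + 2) =>
      have h1 := (ih (m+1) (by omega)).2 (by omega)
      have h0 := (ih m (by omega)).1
      have hm : (X * P (m+1)).Monic := monic_X.mul h1.1
      have hd : (X * P (m+1)).natDegree = m + 2 := by
        rw [natDegree_mul X_ne_zero h1.1.ne_zero, natDegree_X, h1.2]; omega
      have hlt : (P m).degree < (X * P (m+1)).degree := by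
        rw [degree_eq_natDegree hm.ne_zero, hd]
        calc (P m).degree ≤ (P m).natDegree := degree_le_natDegree
          _ < ((m + 2 : ℕ) : WithBot ℕ) := by exact_mod_cast by omega
      have hdeg : (X * P (m+1) + -P m).degree = (X * P (m+1)).degree :=
        degree_add_eq_left_of_degree_lt (by rwa [degree_neg])
      have : (P (m+2)).Monic ∧ (P (m+2)).natDegree = m + 2 := by
        rw [P, sub_eq_add_neg]
        constructor
        · exact hm.add_of_left (by rwa [degree_neg])
        · rw [natDegree_eq_of_degree_eq hdeg, hd]
      exact ⟨this.2.le, fun _ => this⟩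

lemma exp_add_inv (t : ℝ) :
    Complex.exp ((t : ℂ) * Complex.I) + (Complex.exp ((t : ℂ) * Complex.I))⁻¹ =
      (algebraMap ℝ ℂ) (2 * Real.cos t) := by
  have he : (Complex.exp ((t:ℂ) * Complex.I))⁻¹ = Complex.exp (((-t : ℝ) : ℂ) * Complex.I) := by
    rw [← Complex.exp_neg]; push_cast; ring_nf
  have h1 : ((-t : ℝ) : ℂ) = -(t:ℂ) := by push_cast; ring
  rw [he, Complex.exp_mul_I, Complex.exp_mul_I, h1, Complex.cos_neg, Complex.sin_neg,
    Complex.coe_algebraMap]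
  rw [show ((2 * Real.cos t : ℝ) : ℂ) = 2 * ((Real.cos t : ℝ) : ℂ) by push_cast; ring,
    Complex.ofReal_cos]
  ring

lemma psi_conj_root (d k : ℕ) (hd : 0 < d) (hk : Nat.Coprime k d) :
    (Polynomial.aeval (2 * Real.cos (2 * π * k / d)) (minpoly ℚ (2 * Real.cos (2 * π / d))) : ℝ) = 0 := by
  set x : ℝ := 2 * Real.cos (2 * π / d) with hxdef
  set f : Polynomial ℚ := minpoly ℚ x with hfdef
  set m : ℕ := f.natDegree with hmdef
  set ζ : ℂ := Complex.exp (2 * π * Complex.I / d) with hζdef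
  have hd0 : (d : ℝ) ≠ 0 := Nat.cast_ne_zero.mpr hd.ne'
  have hζ : IsPrimitiveRoot ζ d := Complex.isPrimitiveRoot_exp d hd.ne'
  have hζ0 : ζ ≠ 0 := Complex.exp_ne_zero _
  -- ζ and its powers are exponentials of real multiples of I
  have hζe : ζ = Complex.exp (((2 * π / d : ℝ) : ℂ) * Complex.I) := by
    rw [hζdef]; congr 1; push_cast; field_simp
  have hζk : ζ ^ k = Complex.exp (((2 * π * k / d : ℝ) : ℂ) * Complex.I) := by
    rw [hζe, ← Complex.exp_nat_mul]; congr 1; push_cast; field_simp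
  have hx : (algebraMap ℝ ℂ) x = ζ + ζ⁻¹ := by rw [hζe, hxdef, exp_add_inv]
  -- auxiliary polynomial g
  set g : Polynomial ℚ :=
    ∑ i ∈ Finset.range (m + 1), C (f.coeff i) * (X ^ 2 + 1) ^ i * X ^ (m - i) with hgdef
  have key : ∀ y : ℂ, y ≠ 0 → Polynomial.aeval y g = y ^ m * Polynomial.aeval (y + y⁻¹) f := by
    intro y hy
    rw [hgdef, map_sum, Polynomial.aeval_eq_sum_range, Finset.mul_sum, ← hmdef]
    refine Finset.sum_congr rfl fun i hi => ?_
    have him : i ≤ m := Nat.lt_succ_iff.mp (Finset.mem_range.mp hi)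
    rw [map_mul, map_mul, map_pow, map_pow, map_add, map_pow, map_one, aeval_X, aeval_C,
      Algebra.smul_def]
    have h1 : (y + y⁻¹) * y = y ^ 2 + 1 := by field_simp
    have h2 : y ^ m = y ^ i * y ^ (m - i) := by rw [← pow_add]; congr 1; omega
    rw [h2, ← h1, mul_pow]
    ring
  have hfx : Polynomial.aeval (ζ + ζ⁻¹) f = 0 := by
    rw [← hx, hfdef, Polynomial.aeval_algebraMap_apply, minpoly.aeval, map_zero]
  have hgζ : Polynomial.aeval ζ g = 0 := by rw [key ζ hζ0, hfx, mul_zero]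
  have hdvd : minpoly ℚ ζ ∣ g := minpoly.dvd ℚ ζ hgζ
  have hcyc : cyclotomic d ℚ ∣ g := by
    rwa [cyclotomic_eq_minpoly_rat hζ hd]
  have hζkprim : IsPrimitiveRoot (ζ ^ k) d := hζ.pow_of_coprime k hk
  have hrootk : Polynomial.aeval (ζ ^ k) (cyclotomic d ℚ) = 0 := by
    have h := hζkprim.isRoot_cyclotomic hd (R := ℂ)
    rw [Polynomial.IsRoot, ← map_cyclotomic d (algebraMap ℚ ℂ), Polynomial.eval_map,
      ← Polynomial.aeval_def] at h
    exact h
  have hgζk : Polynomial.aeval (ζ ^ k) g = 0 := by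
    obtain ⟨c, hc⟩ := hcyc
    rw [hc, map_mul, hrootk, zero_mul]
  have hζk0 : ζ ^ k ≠ 0 := pow_ne_zero _ hζ0
  have hfxk : Polynomial.aeval (ζ ^ k + (ζ ^ k)⁻¹) f = 0 := by
    have := key (ζ ^ k) hζk0
    rw [hgζk] at this
    exact (mul_eq_zero.mp this.symm).resolve_left (pow_ne_zero _ hζk0)
  have hx2 : (algebraMap ℝ ℂ) (2 * Real.cos (2 * π * k / d)) = ζ ^ k + (ζ ^ k)⁻¹ := by
    rw [hζk, exp_add_inv]
  have : (algebraMap ℝ ℂ) (Polynomial.aeval (2 * Real.cos (2 * π * k / d)) f) = 0 := by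
    rw [← Polynomial.aeval_algebraMap_apply, hx2, hfxk]
  exact (map_eq_zero_iff _ (algebraMap ℝ ℂ).injective).mp this

lemma Pd_sub_two_monic (d : ℕ) (hd : 0 < d) : (P d - 2).Monic ∧ (P d - 2).natDegree = d := by
  have h1 := (P_monic d).2 hd
  have hlt : ((2 : Polynomial ℤ)).degree < (P d).degree := by
    rw [degree_eq_natDegree h1.1.ne_zero, h1.2]
    calc ((2:Polynomial ℤ)).degree ≤ 0 := by
          simpa using degree_C_le (a := (2:ℤ))
      _ < (d : WithBot ℕ) := by exact_mod_cast hd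
  constructor
  · rw [sub_eq_add_neg]; exact h1.1.add_of_left (by rwa [degree_neg])
  · rw [sub_eq_add_neg, natDegree_eq_of_degree_eq (degree_add_eq_left_of_degree_lt
      (by rwa [degree_neg])), h1.2]

lemma Pd_aeval (d : ℕ) (hd : 0 < d) (k : ℕ) :
    (Polynomial.aeval (2 * Real.cos (2 * π / k)) ((P d - 2).map (Int.castRingHom ℚ)) : ℝ) =
      2 * Real.cos (d * (2 * π / k)) - 2 := by
  have : (Int.castRingHom ℚ) = algebraMap ℤ ℚ := rfl
  rw [this, Polynomial.aeval_map_algebraMap, map_sub, P_eval (2 * π / k) d]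
  rw [show ((2 : Polynomial ℤ)) = Polynomial.C 2 by norm_num, aeval_C]
  norm_num

lemma x_integral (d : ℕ) (hd : 0 < d) : IsIntegral ℚ (2 * Real.cos (2 * π / d)) := by
  refine IsAlgebraic.isIntegral ⟨(P d - 2).map (Int.castRingHom ℚ), ?_, ?_⟩
  · have := (Pd_sub_two_monic d hd).1
    exact ((this.map (Int.castRingHom ℚ)).ne_zero)
  · rw [Pd_aeval d hd d]
    have hd0 : (d : ℝ) ≠ 0 := Nat.cast_ne_zero.mpr hd.ne'
    rw [show (d : ℝ) * (2 * π / d) = 2 * π by field_simp]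
    simp [Real.cos_two_pi]

lemma psi_distinct {d d' : ℕ} (hd : 0 < d) (hd' : 0 < d')
    (h : minpoly ℚ (2 * Real.cos (2 * π / d)) = minpoly ℚ (2 * Real.cos (2 * π / d'))) :
    d = d' := by
  have key : ∀ a b : ℕ, 0 < a → 0 < b →
      minpoly ℚ (2 * Real.cos (2 * π / a)) = minpoly ℚ (2 * Real.cos (2 * π / b)) → b ∣ a := by
    intro a b ha hb hab
    have hdvd : minpoly ℚ (2 * Real.cos (2 * π / a)) ∣ (P a - 2).map (Int.castRingHom ℚ) := by
      apply minpoly.dvd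
      rw [Pd_aeval a ha a]
      have ha0 : (a : ℝ) ≠ 0 := Nat.cast_ne_zero.mpr ha.ne'
      rw [show (a : ℝ) * (2 * π / a) = 2 * π by field_simp]
      simp [Real.cos_two_pi]
    rw [hab] at hdvd
    obtain ⟨c, hc⟩ := hdvd
    have hz : (Polynomial.aeval (2 * Real.cos (2 * π / b))
        ((P a - 2).map (Int.castRingHom ℚ)) : ℝ) = 0 := by
      rw [hc, map_mul, minpoly.aeval, zero_mul]
    rw [Pd_aeval a ha b] at hz
    have hcos : Real.cos ((a : ℝ) * (2 * π / b)) = 1 := by linarith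
    obtain ⟨m, hm⟩ := (Real.cos_eq_one_iff _).mp hcos
    have hb0 : (b : ℝ) ≠ 0 := Nat.cast_ne_zero.mpr hb.ne'
    have hm2 : (m : ℝ) * b = a := by
      have hπ : π ≠ 0 := Real.pi_ne_zero
      field_simp at hm
      have hπ2 : (0:ℝ) < 2 * π := by positivity
      nlinarith [hm, hπ2]
    have hm3 : (m * b : ℤ) = (a : ℤ) := by exact_mod_cast hm2
    have : (b : ℤ) ∣ (a : ℤ) := Dvd.intro_left m hm3
    exact_mod_cast this
  exact Nat.dvd_antisymm (key d' d hd' hd h.symm) (key d d' hd hd' h)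

lemma master (n s : ℕ) (hn : 0 < n) (h2s : 2 * s ≤ n) (hn2 : n ≤ 2 * s + 1) (F : Polynomial ℚ)
    (hFm : F.Monic) (hFd : F.natDegree = s + 1)
    (hroot : ∀ k : ℕ, (Polynomial.aeval (2 * Real.cos (2 * π * k / n)) F : ℝ) = 0) :
    ∏ d ∈ Nat.divisors n, minpoly ℚ (2 * Real.cos (2 * π / d)) = F := by
  set Ψ : ℕ → Polynomial ℚ := fun d => minpoly ℚ (2 * Real.cos (2 * π / d)) with hΨ
  have hn0 : (n : ℝ) ≠ 0 := Nat.cast_ne_zero.mpr hn.ne'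
  have hpos : ∀ d ∈ Nat.divisors n, 0 < d := fun d hd => Nat.pos_of_mem_divisors hd
  have hmono : ∀ d ∈ Nat.divisors n, (Ψ d).Monic :=
    fun d hd => minpoly.monic (x_integral d (hpos d hd))
  -- each Ψ d divides F
  have hdvdF : ∀ d ∈ Nat.divisors n, Ψ d ∣ F := by
    intro d hd
    have hdp := hpos d hd
    have hd0 : (d : ℝ) ≠ 0 := Nat.cast_ne_zero.mpr hdp.ne'
    have hddvd : d ∣ n := Nat.dvd_of_mem_divisors hd
    apply minpoly.dvd
    have hcast : ((n / d : ℕ) : ℝ) = (n : ℝ) / d := Nat.cast_div hddvd hd0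
    have : 2 * π / (d : ℝ) = 2 * π * ((n / d : ℕ) : ℝ) / n := by
      rw [hcast]; field_simp
    rw [this]
    exact hroot (n / d)
  -- pairwise coprime
  have hpair : (Nat.divisors n : Set ℕ).Pairwise (Function.onFun IsCoprime Ψ) := by
    intro d hd d' hd' hne
    have hirr := minpoly.irreducible (x_integral d (hpos d (by simpa using hd)))
    have hirr' := minpoly.irreducible (x_integral d' (hpos d' (by simpa using hd')))
    refine hirr.coprime_iff_not_dvd.mpr fun hdvd => hne ?_
    exact psi_distinct (hpos d (by simpa using hd)) (hpos d' (by simpa using hd'))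
      (eq_of_monic_of_associated (hmono d (by simpa using hd)) (hmono d' (by simpa using hd'))
        (hirr.associated_of_dvd hirr' hdvd))
  have hproddvd : ∏ d ∈ Nat.divisors n, Ψ d ∣ F := Finset.prod_dvd_of_coprime hpair hdvdF
  have hprodmonic : (∏ d ∈ Nat.divisors n, Ψ d).Monic := monic_prod_of_monic _ _ hmono
  -- lower bound on degree via real roots
  set Q : Polynomial ℝ := (∏ d ∈ Nat.divisors n, Ψ d).map (algebraMap ℚ ℝ) with hQ
  have hQmonic : Q.Monic := hprodmonic.map _
  set r : ℕ → ℝ := fun k => 2 * Real.cos (2 * π * k / n) with hr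
  have hQroot : ∀ k, Q.IsRoot (r k) := by
    intro k
    have hg : 0 < Nat.gcd k n := Nat.gcd_pos_of_pos_right k hn
    have hg0 : ((Nat.gcd k n : ℕ) : ℝ) ≠ 0 := Nat.cast_ne_zero.mpr hg.ne'
    set g := Nat.gcd k n
    have hdd : n / g ∣ n := Nat.div_dvd_of_dvd (Nat.gcd_dvd_right k n)
    have hdpos : 0 < n / g := Nat.div_pos (Nat.le_of_dvd hn (Nat.gcd_dvd_right k n)) hg
    have hmem : n / g ∈ Nat.divisors n := Nat.mem_divisors.mpr ⟨hdd, hn.ne'⟩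
    have hcop : Nat.Coprime (k / g) (n / g) := Nat.coprime_div_gcd_div_gcd hg
    have hck : ((k / g : ℕ) : ℝ) = (k : ℝ) / g := Nat.cast_div (Nat.gcd_dvd_left k n) hg0
    have hcn : ((n / g : ℕ) : ℝ) = (n : ℝ) / g := Nat.cast_div (Nat.gcd_dvd_right k n) hg0
    have hdR0 : ((n / g : ℕ) : ℝ) ≠ 0 := Nat.cast_ne_zero.mpr hdpos.ne'
    have harg : 2 * π * (k : ℝ) / n = 2 * π * ((k / g : ℕ) : ℝ) / ((n / g : ℕ) : ℝ) := by
      rw [hck, hcn]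
      field_simp
    have hzero := psi_conj_root (n / g) (k / g) hdpos hcop
    rw [Polynomial.IsRoot, hQ, Polynomial.map_prod, Polynomial.eval_prod]
    refine Finset.prod_eq_zero hmem ?_
    have : Polynomial.eval (r k) ((Ψ (n / g)).map (algebraMap ℚ ℝ)) =
        Polynomial.aeval (r k) (Ψ (n / g)) := by
      rw [Polynomial.aeval_def, Polynomial.eval₂_eq_eval_map]
    rw [this, hr]
    simp only
    rw [harg]
    exact hzero
  -- the roots r k, k ∈ range (s+1), are distinct
  have hrinj : Set.InjOn r (Finset.range (s + 1)) := by
    intro a ha b hb hab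
    simp only [Finset.coe_range, Set.mem_Iio] at ha hb
    have hbound : ∀ c : ℕ, c < s + 1 → 2 * π * (c : ℝ) / n ∈ Set.Icc 0 π := by
      intro c hc
      constructor
      · positivity
      · rw [div_le_iff₀ (by positivity)]
        have : (2 : ℝ) * c ≤ n := by
          have : 2 * c ≤ n := by omega
          exact_mod_cast this
        nlinarith [Real.pi_pos]
    have := Real.injOn_cos (hbound a ha) (hbound b hb) (by
      have : Real.cos (2 * π * a / n) = Real.cos (2 * π * b / n) := by
        have h2 : r a = r b := hab
        rw [hr] at h2; simp only at h2; linarith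
      exact this)
    have hne : (2 : ℝ) * π ≠ 0 := by positivity
    field_simp at this
    exact_mod_cast this
  have hdvd2 : ∏ k ∈ Finset.range (s + 1), (X - C (r k)) ∣ Q := by
    refine Finset.prod_dvd_of_coprime ?_ fun k _ => (dvd_iff_isRoot).mpr (hQroot k)
    intro a ha b hb hne
    exact Polynomial.isCoprime_X_sub_C_of_isUnit_sub (by
      simpa using sub_ne_zero.mpr (fun h => hne (hrinj ha hb h)))
  have hdeglow : s + 1 ≤ (∏ d ∈ Nat.divisors n, Ψ d).natDegree := by
    have hQdeg : Q.natDegree = (∏ d ∈ Nat.divisors n, Ψ d).natDegree :=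
      hprodmonic.natDegree_map _
    have h1 : (∏ k ∈ Finset.range (s + 1), (X - C (r k))).natDegree = s + 1 := by
      rw [natDegree_prod_of_monic _ _ fun k _ => monic_X_sub_C _]
      simp
    have h2 := Polynomial.natDegree_le_of_dvd hdvd2 hQmonic.ne_zero
    rw [h1] at h2
    rwa [hQdeg] at h2
  refine eq_of_dvd_of_natDegree_le_of_leadingCoeff hproddvd ?_ ?_
  · rw [hFd]; exact hdeglow
  · rw [hprodmonic.leadingCoeff, hFm.leadingCoeff]

lemma P_sub_monic {a b : ℕ} (h1 : 1 ≤ a) (hb : b < a) :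
    (P a - P b).Monic ∧ (P a - P b).natDegree = a := by
  have ha := (P_monic a).2 h1
  have hlt : (P b).degree < (P a).degree := by
    rw [degree_eq_natDegree ha.1.ne_zero, ha.2]
    calc (P b).degree ≤ (P b).natDegree := degree_le_natDegree
      _ < (a : WithBot ℕ) := by exact_mod_cast lt_of_le_of_lt (P_monic b).1 hb
  constructor
  · rw [sub_eq_add_neg]; exact ha.1.add_of_left (by rwa [degree_neg])
  · rw [sub_eq_add_neg, natDegree_eq_of_degree_eq (degree_add_eq_left_of_degree_lt
      (by rwa [degree_neg])), ha.2]

theorem watkins_zeitlin :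
    (∀ s : ℕ, 1 ≤ s →
      ∏ d ∈ Nat.divisors (2 * s), minpoly ℚ (2 * Real.cos (2 * π / d)) =
        (P (s + 1) - P (s - 1)).map (Int.castRingHom ℚ)) ∧
    (∀ s : ℕ,
      ∏ d ∈ Nat.divisors (2 * s + 1), minpoly ℚ (2 * Real.cos (2 * π / d)) =
        (P (s + 1) - P s).map (Int.castRingHom ℚ)) := by
  constructor
  · intro s hs
    have hs0 : (s : ℝ) ≠ 0 := Nat.cast_ne_zero.mpr (by omega)
    have hM := P_sub_monic (a := s + 1) (b := s - 1) (by omega) (by omega)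
    refine master (2 * s) s (by omega) (by omega) (by omega) _ (hM.1.map _) ?_ ?_
    · rw [hM.1.natDegree_map, hM.2]
    · intro k
      rw [show (Int.castRingHom ℚ) = algebraMap ℤ ℚ from rfl, Polynomial.aeval_map_algebraMap,
        map_sub]
      set θ : ℝ := 2 * π * k / (2 * s : ℕ) with hθ
      rw [P_eval θ (s + 1), P_eval θ (s - 1)]
      have e1 : ((s + 1 : ℕ) : ℝ) * θ = k * π + θ := by
        rw [hθ]; push_cast; field_simp
      have e2 : ((s - 1 : ℕ) : ℝ) * θ = k * π - θ := by
        rw [hθ]; push_cast [Nat.cast_sub hs]; field_simp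
      rw [e1, e2, Real.cos_add, Real.cos_sub, Real.sin_nat_mul_pi]
      ring
  · intro s
    have hs0 : (2 * (s : ℝ) + 1) ≠ 0 := by positivity
    have hM := P_sub_monic (a := s + 1) (b := s) (by omega) (by omega)
    refine master (2 * s + 1) s (by omega) (by omega) (by omega) _ (hM.1.map _) ?_ ?_
    · rw [hM.1.natDegree_map, hM.2]
    · intro k
      rw [show (Int.castRingHom ℚ) = algebraMap ℤ ℚ from rfl, Polynomial.aeval_map_algebraMap,
        map_sub]
      set θ : ℝ := 2 * π * k / (2 * s + 1 : ℕ) with hθ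
      rw [P_eval θ (s + 1), P_eval θ s]
      have e1 : ((s + 1 : ℕ) : ℝ) * θ = k * π + θ / 2 := by
        rw [hθ]; push_cast; field_simp; ring
      have e2 : (s : ℝ) * θ = k * π - θ / 2 := by
        rw [hθ]; push_cast; field_simp; ring
      rw [e1, e2, Real.cos_add, Real.cos_sub, Real.sin_nat_mul_pi]
      ring
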